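/- Let 0 ≤ k ≤ l and let G be a graph with no B_{k+1} and no K_{2,l+1}, of order n. Then for every vertex u, Σ_{v adjacent to u} (d(v) - k - 1) ≤ (n - d(u) - 1)·l. -/
import Mathlib


-- `G` contains no book `B_{k+1}`: adjacent vertices have at most `k` common neighbors.
-- `G` contains no `K_{2,l+1}`: nonadjacent vertices have at most `l` common neighbors.
theorem neighbor_degree_sum_bound {n k l : ℕ} (hkl : k ≤ l) (G : SimpleGraph (Fin n))
    [DecidableRel G.Adj]
    (hbook : ∀ u v : Fin n, G.Adj u v →
      (G.neighborFinset u ∩ G.neighborFinset v).card ≤ k)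
    (hK2l : ∀ u v : Fin n, u ≠ v → ¬ G.Adj u v →
      (G.neighborFinset u ∩ G.neighborFinset v).card ≤ l)
    (u : Fin n) :
    ∑ v ∈ G.neighborFinset u, ((G.degree v : ℝ) - k - 1) ≤
      ((n : ℝ) - G.degree u - 1) * l := by
  classical
  set A := G.neighborFinset u with hA
  set W : Finset (Fin n) := Finset.univ \ insert u A with hW
  -- per-vertex bound
  have hdeg : ∀ v ∈ A, G.degree v ≤ 1 + k + (G.neighborFinset v ∩ W).card := by
    intro v hv
    have hsub : G.neighborFinset v ⊆
        insert u ((G.neighborFinset v ∩ A) ∪ (G.neighborFinset v ∩ W)) := by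
      intro w hw
      by_cases hwu : w = u
      · simp [hwu]
      · by_cases hwA : w ∈ A
        · exact Finset.mem_insert_of_mem (Finset.mem_union_left _ (Finset.mem_inter.2 ⟨hw, hwA⟩))
        · refine Finset.mem_insert_of_mem (Finset.mem_union_right _ (Finset.mem_inter.2 ⟨hw, ?_⟩))
          simp [hW, hwu, hwA]
    have h1 : G.degree v ≤ 1 + ((G.neighborFinset v ∩ A).card + (G.neighborFinset v ∩ W).card) := by
      calc G.degree v = (G.neighborFinset v).card := (G.card_neighborFinset_eq_degree v).symm
        _ ≤ _ := by
            refine (Finset.card_le_card hsub).trans ?_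
            refine (Finset.card_insert_le _ _).trans ?_
            have := Finset.card_union_le (G.neighborFinset v ∩ A) (G.neighborFinset v ∩ W)
            omega
    have hadj : G.Adj u v := by rwa [← SimpleGraph.mem_neighborFinset]
    have hk : (G.neighborFinset v ∩ A).card ≤ k := by
      have := hbook u v hadj
      rwa [Finset.inter_comm] at this
    omega
  have step1 : ∑ v ∈ A, ((G.degree v : ℝ) - k - 1) ≤
      ∑ v ∈ A, ((G.neighborFinset v ∩ W).card : ℝ) := by
    refine Finset.sum_le_sum fun v hv => ?_
    have := hdeg v hv
    have : (G.degree v : ℝ) ≤ 1 + k + ((G.neighborFinset v ∩ W).card : ℝ) := by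
      exact_mod_cast this
    linarith
  -- double counting
  have hdc : ∑ v ∈ A, (G.neighborFinset v ∩ W).card
      = ∑ w ∈ W, (G.neighborFinset w ∩ A).card := by
    have h1 : ∀ (v : Fin n) (S : Finset (Fin n)), (G.neighborFinset v ∩ S).card
        = ∑ w ∈ S, if G.Adj v w then 1 else 0 := by
      intro v S
      rw [Finset.inter_comm, ← Finset.filter_mem_eq_inter, Finset.card_filter]
      exact Finset.sum_congr rfl fun w _ => by simp [SimpleGraph.mem_neighborFinset]
    simp_rw [h1]
    rw [Finset.sum_comm]
    refine Finset.sum_congr rfl fun w hw => Finset.sum_congr rfl fun v hv => ?_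
    simp [SimpleGraph.adj_comm]
  have step2 : ∑ w ∈ W, (G.neighborFinset w ∩ A).card ≤ W.card * l := by
    have : ∀ w ∈ W, (G.neighborFinset w ∩ A).card ≤ l := by
      intro w hw
      simp only [hW, Finset.mem_sdiff, Finset.mem_insert] at hw
      push_neg at hw
      obtain ⟨-, hwu, hwA⟩ := hw
      have hnadj : ¬ G.Adj u w := by
        rw [← SimpleGraph.mem_neighborFinset]; exact hwA
      exact hK2l w u hwu (fun h => hnadj h.symm)
    calc ∑ w ∈ W, (G.neighborFinset w ∩ A).card ≤ ∑ w ∈ W, l := Finset.sum_le_sum this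
      _ = W.card * l := by rw [Finset.sum_const, smul_eq_mul]
  have hWcard : (W.card : ℝ) = (n : ℝ) - G.degree u - 1 := by
    have hu : u ∉ A := by simp [hA]
    have hsub : insert u A ⊆ Finset.univ := Finset.subset_univ _
    have : W.card = n - (G.degree u + 1) := by
      rw [hW, Finset.card_sdiff_of_subset hsub, Finset.card_univ, Finset.card_insert_of_notMem hu,
        Fintype.card_fin]
      simp [hA, G.card_neighborFinset_eq_degree]
    have hle : G.degree u + 1 ≤ n := by
      have := Finset.card_le_card hsub
      rw [Finset.card_insert_of_notMem hu, Finset.card_univ, Fintype.card_fin] at this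
      simpa [hA] using this
    rw [this]
    push_cast [Nat.cast_sub hle]
    ring
  calc ∑ v ∈ A, ((G.degree v : ℝ) - k - 1)
      ≤ ∑ v ∈ A, ((G.neighborFinset v ∩ W).card : ℝ) := step1
    _ = ((∑ v ∈ A, (G.neighborFinset v ∩ W).card : ℕ) : ℝ) := by push_cast; ring
    _ ≤ ((W.card * l : ℕ) : ℝ) := by exact_mod_cast hdc ▸ step2
    _ = ((n : ℝ) - G.degree u - 1) * l := by rw [Nat.cast_mul, hWcard]
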